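/- Let G be a connected unicyclic graph with unique cycle C, let x be a vertex outside C adjacent to a vertex y of C, and let T_x be the component of G − xy containing x (a tree). If x ∈ core(T_x), then α(G) + μ(G) = |V(G)|, i.e., G is a König–Egerváry graph. -/

import Mathlib

/-- A set of vertices is independent if no two of its vertices are adjacent. -/
def SimpleGraph.IsIndepSet' {V : Type*} (G : SimpleGraph V) (s : Set V) : Prop :=
  s.Pairwise (fun a b => ¬ G.Adj a b)

/-- The independence number: the maximum cardinality of an independent set. -/
noncomputable def indepNum {V : Type*} (G : SimpleGraph V) : ℕ :=
  sSup {n | ∃ s : Set V, G.IsIndepSet' s ∧ s.ncard = n}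

/-- The matching number: the maximum cardinality of a matching. -/
noncomputable def matchNum {V : Type*} (G : SimpleGraph V) : ℕ :=
  sSup {n | ∃ M : SimpleGraph.Subgraph G, M.IsMatching ∧ M.edgeSet.ncard = n}

/-- A maximum independent set. -/
def IsMaxIndepSet {V : Type*} (G : SimpleGraph V) (s : Set V) : Prop :=
  G.IsIndepSet' s ∧ s.ncard = indepNum G

/-- The core: intersection of all maximum independent sets. -/
noncomputable def core {V : Type*} (G : SimpleGraph V) : Set V :=
  ⋂₀ {s | IsMaxIndepSet G s}

/-- Open neighborhood of a set. -/
def nbhdSet {V : Type*} (G : SimpleGraph V) (s : Set V) : Set V :=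
  {v | ∃ w ∈ s, G.Adj v w}

/-- Closed neighborhood of a set. -/
def closedNbhdSet {V : Type*} (G : SimpleGraph V) (s : Set V) : Set V :=
  s ∪ nbhdSet G s

/-- The tree component of `G - xy` containing `x`. -/
noncomputable def treeComp {V : Type*} (G : SimpleGraph V) (x y : V) :
    SimpleGraph ((G.deleteEdges {s(x,y)}).connectedComponentMk x).supp :=
  (G.deleteEdges {s(x,y)}).induce ((G.deleteEdges {s(x,y)}).connectedComponentMk x).supp


open Set
open SimpleGraph hiding indepNum

section Basic
variable {V : Type*} [Finite V] (G : SimpleGraph V)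

lemma indep_ncard_le_indepNum {s : Set V} (hs : G.IsIndepSet' s) : s.ncard ≤ indepNum G := by
  refine le_csSup ⟨Nat.card V, ?_⟩ ⟨s, hs, rfl⟩
  rintro n ⟨t, _, rfl⟩
  exact le_trans (Set.ncard_le_ncard (subset_univ t) finite_univ) (le_of_eq (ncard_univ V))

lemma exists_maxIndepSet : ∃ s : Set V, IsMaxIndepSet G s := by
  have hne : {n | ∃ s : Set V, G.IsIndepSet' s ∧ s.ncard = n}.Nonempty :=
    ⟨0, ∅, by simp [SimpleGraph.IsIndepSet'], by simp⟩
  have hbdd : BddAbove {n | ∃ s : Set V, G.IsIndepSet' s ∧ s.ncard = n} := by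
    refine ⟨Nat.card V, ?_⟩
    rintro n ⟨t, _, rfl⟩
    exact le_trans (Set.ncard_le_ncard (subset_univ t) finite_univ) (le_of_eq (ncard_univ V))
  obtain ⟨s, hs, hcard⟩ := Nat.sSup_mem hne hbdd
  exact ⟨s, hs, hcard⟩

lemma matching_ncard_le_matchNum {M : SimpleGraph.Subgraph G} (hM : M.IsMatching) :
    M.edgeSet.ncard ≤ matchNum G := by
  refine le_csSup ⟨Nat.card (Sym2 V), ?_⟩ ⟨M, hM, rfl⟩
  rintro n ⟨N, _, rfl⟩
  exact le_trans (Set.ncard_le_ncard (subset_univ _) finite_univ) (le_of_eq (ncard_univ _))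

lemma exists_maxMatching : ∃ M : SimpleGraph.Subgraph G, M.IsMatching ∧
    M.edgeSet.ncard = matchNum G := by
  have hne : {n | ∃ M : SimpleGraph.Subgraph G, M.IsMatching ∧ M.edgeSet.ncard = n}.Nonempty := by
    refine ⟨0, ⊥, ?_, by simp [Subgraph.edgeSet_bot]⟩
    intro v hv
    simp [Subgraph.verts_bot] at hv
  have hbdd : BddAbove {n | ∃ M : SimpleGraph.Subgraph G, M.IsMatching ∧ M.edgeSet.ncard = n} := by
    refine ⟨Nat.card (Sym2 V), ?_⟩
    rintro n ⟨N, _, rfl⟩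
    exact le_trans (Set.ncard_le_ncard (subset_univ _) finite_univ) (le_of_eq (ncard_univ _))
  exact Nat.sSup_mem hne hbdd

end Basic

section Upper
variable {V : Type*} {G : SimpleGraph V}

lemma matching_edge_eq_of_mem {M : SimpleGraph.Subgraph G} (hM : M.IsMatching)
    {e e' : Sym2 V} (he : e ∈ M.edgeSet) (he' : e' ∈ M.edgeSet) {v : V}
    (hv : v ∈ e) (hv' : v ∈ e') : e = e' := by
  obtain ⟨w, rfl⟩ := Sym2.mem_iff_exists.mp hv
  obtain ⟨w', rfl⟩ := Sym2.mem_iff_exists.mp hv'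
  rw [SimpleGraph.Subgraph.mem_edgeSet] at he he'
  have := (hM (M.edge_vert he)).unique he he'
  rw [this]

lemma indep_matching_ncard_le [Finite V] {S : Set V} (hS : G.IsIndepSet' S)
    {M : SimpleGraph.Subgraph G} (hM : M.IsMatching) :
    S.ncard + M.edgeSet.ncard ≤ Nat.card V := by
  classical
  cases isEmpty_or_nonempty V with
  | inl h =>
    have : S = ∅ := Set.eq_empty_of_isEmpty S
    have h2 : M.edgeSet = ∅ := Set.eq_empty_of_isEmpty _
    simp [this, h2]
  | inr h =>
  have hch : ∀ e ∈ M.edgeSet, ∃ v, v ∈ e ∧ v ∉ S := by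
    intro e he
    induction e with | h a b =>
    have hadj : G.Adj a b := M.adj_sub (SimpleGraph.Subgraph.mem_edgeSet.mp he)
    by_cases ha : a ∈ S
    · refine ⟨b, by simp, fun hb => ?_⟩
      exact hS ha hb hadj.ne hadj
    · exact ⟨a, by simp, ha⟩
  choose f hf1 hf2 using hch
  set g : Sym2 V → V := fun e => if h : e ∈ M.edgeSet then f e h else Classical.arbitrary _
  have hg1 : ∀ e ∈ M.edgeSet, g e ∈ Sᶜ := by
    intro e he; simp only [g, dif_pos he]; exact hf2 e he
  have hg2 : Set.InjOn g M.edgeSet := by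
    intro e he e' he' hee
    simp only [g, dif_pos he, dif_pos he'] at hee
    exact matching_edge_eq_of_mem hM he he' (hee ▸ hf1 e he) (hf1 e' he')
  have h1 : M.edgeSet.ncard ≤ (Sᶜ).ncard :=
    Set.ncard_le_ncard_of_injOn g hg1 hg2 (Set.toFinite _)
  have h2 := Set.ncard_add_ncard_compl S
  omega

lemma indepNum_add_matchNum_le [Finite V] (G : SimpleGraph V) :
    indepNum G + matchNum G ≤ Nat.card V := by
  obtain ⟨S, hS, hScard⟩ := exists_maxIndepSet G
  obtain ⟨M, hM, hMcard⟩ := exists_maxMatching G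
  rw [← hScard, ← hMcard]
  exact indep_matching_ncard_le hS hM

end Upper

section LowerTools
variable {V : Type*} {G : SimpleGraph V}

lemma edgeMatching_le_matchNum [Finite V] {E : Set (Sym2 V)} (hE : E ⊆ G.edgeSet)
    (hd : E.Pairwise fun e e' => ∀ v, v ∈ e → v ∉ e') : E.ncard ≤ matchNum G := by
  classical
  let M : SimpleGraph.Subgraph G := {
    verts := {v | ∃ e ∈ E, v ∈ e}
    Adj := fun a b => s(a, b) ∈ E
    adj_sub := fun h => hE h
    edge_vert := fun {a b} h => ⟨s(a, b), h, by simp⟩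
    symm := ⟨fun a b (h : s(a, b) ∈ E) => show s(b, a) ∈ E by rwa [Sym2.eq_swap]⟩ }
  have hM : M.IsMatching := by
    rintro v ⟨e, heE, hve⟩
    obtain ⟨w, rfl⟩ := Sym2.mem_iff_exists.mp hve
    refine ⟨w, heE, ?_⟩
    intro y hy
    have heq : s(v, y) = s(v, w) := by
      by_contra hne
      exact (hd hy heE hne) v (by simp) (by simp)
    exact Sym2.congr_right.mp heq
  have hes : M.edgeSet = E := by
    ext e
    induction e with | h a b => exact SimpleGraph.Subgraph.mem_edgeSet
  calc E.ncard = M.edgeSet.ncard := by rw [hes]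
    _ ≤ matchNum G := matching_ncard_le_matchNum G hM

end LowerTools

section Counting
variable {V : Type*}

/-- Edges of `H` with both endpoints inside `s`. -/
def einside (H : SimpleGraph V) (s : Set V) : Set (Sym2 V) :=
  {e | e ∈ H.edgeSet ∧ ∀ v ∈ e, v ∈ s}

/-- `s` is connected within `H` using walks staying in `s`. -/
def connOn (H : SimpleGraph V) (s : Set V) : Prop :=
  ∀ u ∈ s, ∀ w ∈ s, ∃ p : H.Walk u w, ∀ v ∈ p.support, v ∈ s

lemma einside_mono {H H' : SimpleGraph V} (h : H ≤ H') (s : Set V) :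
    einside H s ⊆ einside H' s := by
  rintro e ⟨he, hv⟩
  exact ⟨SimpleGraph.edgeSet_mono h he, hv⟩

lemma connOn_card_le [Finite V] {H : SimpleGraph V} {s : Set V}
    (hc : connOn H s) (hne : s.Nonempty) : s.ncard ≤ (einside H s).ncard + 1 := by
  classical
  obtain ⟨r, hr⟩ := hne
  -- distance to r within s
  set P : V → Set ℕ := fun v => {n | ∃ p : H.Walk v r, p.length = n ∧ ∀ u ∈ p.support, u ∈ s}
  set d : V → ℕ := fun v => sInf (P v)
  have hPne : ∀ v ∈ s, (P v).Nonempty := by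
    intro v hv
    obtain ⟨p, hp⟩ := hc v hv r hr
    exact ⟨p.length, p, rfl, hp⟩
  have hstep : ∀ v ∈ s \ {r}, ∃ b, H.Adj v b ∧ b ∈ s ∧ d b < d v := by
    rintro v ⟨hv, hvr⟩
    obtain ⟨p, hlen, hsupp⟩ := Nat.sInf_mem (hPne v hv)
    cases p with
    | nil => simp at hvr
    | cons h q =>
      rename_i b
      refine ⟨b, h, hsupp b (by simp), ?_⟩
      have h1 : d b ≤ q.length := Nat.sInf_le ⟨q, rfl, fun u hu => hsupp u (by simp [hu])⟩
      have h2 : q.length + 1 = d v := by simpa using hlen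
      omega
  choose bf hbf1 hbf2 hbf3 using hstep
  set f : V → Sym2 V := fun v => if h : v ∈ s \ {r} then s(v, bf v h) else s(v, v)
  have hmaps : ∀ v ∈ s \ {r}, f v ∈ einside H s := by
    intro v hv
    simp only [f, dif_pos hv]
    refine ⟨(hbf1 v hv), ?_⟩
    intro u hu
    rcases Sym2.mem_iff.mp hu with rfl | rfl
    · exact hv.1
    · exact hbf2 v hv
  have hinj : Set.InjOn f (s \ {r}) := by
    intro v hv w hw hvw
    by_contra hne'
    simp only [f, dif_pos hv, dif_pos hw, Sym2.eq_iff] at hvw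
    rcases hvw with ⟨rfl, h2⟩ | ⟨h1, h2⟩
    · exact hne' rfl
    · have ha := hbf3 v hv
      have hb := hbf3 w hw
      rw [h2] at ha
      rw [← h1] at hb
      omega
  have h1 : (s \ {r}).ncard ≤ (einside H s).ncard :=
    Set.ncard_le_ncard_of_injOn f hmaps hinj (Set.toFinite _)
  have h2 : (s \ {r}).ncard = s.ncard - 1 := Set.ncard_diff_singleton_of_mem hr
  have h3 : 0 < s.ncard := (Set.ncard_pos (Set.toFinite s)).mpr ⟨r, hr⟩
  omega

end Counting

section LB
variable {V : Type*}

lemma walk_avoid_edge {H : SimpleGraph V} {s : Set V} {a b : V} {q : H.Walk b a}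
    (hq : s(a, b) ∉ q.edges) (hqs : ∀ v ∈ q.support, v ∈ s) :
    ∀ {u w : V} (p : H.Walk u w), (∀ v ∈ p.support, v ∈ s) →
      ∃ p' : (H.deleteEdges {s(a, b)}).Walk u w, ∀ v ∈ p'.support, v ∈ s := by
  have hq' : ∀ e ∈ q.edges, e ∈ (H.deleteEdges {s(a, b)}).edgeSet := by
    intro e he
    rw [SimpleGraph.edgeSet_deleteEdges]
    exact ⟨q.edges_subset_edgeSet he, by simp; rintro rfl; exact hq he⟩
  set q₀ : (H.deleteEdges {s(a, b)}).Walk b a := q.transfer _ hq' with hq₀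
  have hq₀s : ∀ v ∈ q₀.support, v ∈ s := by
    rw [hq₀, SimpleGraph.Walk.support_transfer]; exact hqs
  intro u w p
  induction p with
  | nil => exact fun h => ⟨SimpleGraph.Walk.nil, h⟩
  | @cons u₁ u₂ w₁ h p₂ ih =>
    intro hsupp
    obtain ⟨p₂', hp₂'⟩ := ih (fun v hv => hsupp v (by simp [hv]))
    by_cases he : s(u₁, u₂) = s(a, b)
    · rw [Sym2.eq_iff] at he
      rcases he with ⟨rfl, rfl⟩ | ⟨rfl, rfl⟩
      · refine ⟨q₀.reverse.append p₂', ?_⟩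
        intro v hv
        rcases (SimpleGraph.Walk.mem_support_append_iff _ _).mp hv with hv | hv
        · exact hq₀s v (by simpa using hv)
        · exact hp₂' v hv
      · refine ⟨q₀.append p₂', ?_⟩
        intro v hv
        rcases (SimpleGraph.Walk.mem_support_append_iff _ _).mp hv with hv | hv
        · exact hq₀s v hv
        · exact hp₂' v hv
    · refine ⟨SimpleGraph.Walk.cons ?_ p₂', ?_⟩
      · rw [SimpleGraph.deleteEdges_adj]
        exact ⟨h, by simpa using he⟩
      · intro v hv
        rcases (by simpa using hv : v = u₁ ∨ v ∈ p₂'.support) with rfl | hv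
        · exact hsupp v (by simp)
        · exact hp₂' v hv

lemma connOn_cycle_card_le [Finite V] {H : SimpleGraph V} {s : Set V}
    (hc : connOn H s) {u : V} (c : H.Walk u u) (hcyc : c.IsCycle)
    (hcs : ∀ v ∈ c.support, v ∈ s) : s.ncard ≤ (einside H s).ncard := by
  classical
  cases c with
  | nil => exact absurd SimpleGraph.Walk.Nil.nil hcyc.not_nil
  | cons hadj q =>
    rename_i b
    have hcyc' := (SimpleGraph.Walk.cons_isCycle_iff q hadj).mp hcyc
    have hqs : ∀ v ∈ q.support, v ∈ s := fun v hv => hcs v (by simp [hv])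
    -- delete the edge s(u,b)
    have hub : s(u, b) ∈ einside H s := by
      refine ⟨hadj, ?_⟩
      intro v hv
      rcases Sym2.mem_iff.mp hv with rfl | rfl
      · exact hcs v (by simp)
      · exact hqs v (SimpleGraph.Walk.start_mem_support q)
    have hq' : s(u, b) ∉ q.edges := hcyc'.2
    have hc' : connOn (H.deleteEdges {s(u, b)}) s := by
      intro u₁ hu₁ w₁ hw₁
      obtain ⟨p, hp⟩ := hc u₁ hu₁ w₁ hw₁
      exact walk_avoid_edge hq' hqs p hp
    have hne : s.Nonempty := ⟨u, hcs u (by simp)⟩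
    have h1 := connOn_card_le hc' hne
    have h2 : einside (H.deleteEdges {s(u, b)}) s ⊆ einside H s \ {s(u, b)} := by
      rintro e ⟨he, hv⟩
      rw [SimpleGraph.edgeSet_deleteEdges] at he
      exact ⟨⟨he.1, hv⟩, by simpa using he.2⟩
    have h3 : (einside (H.deleteEdges {s(u, b)}) s).ncard ≤ (einside H s \ {s(u, b)}).ncard :=
      Set.ncard_le_ncard h2 (Set.toFinite _)
    have h4 : (einside H s \ {s(u, b)}).ncard = (einside H s).ncard - 1 :=
      Set.ncard_diff_singleton_of_mem hub
    have h5 : 0 < (einside H s).ncard := (Set.ncard_pos (Set.toFinite _)).mpr ⟨_, hub⟩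
    omega

end LB

section Forest
variable {V : Type*}

/-- No cycle of `H` has support inside `s`. -/
def acycOn (H : SimpleGraph V) (s : Set V) : Prop :=
  ∀ (u : V) (c : H.Walk u u), c.IsCycle → ¬ (∀ v ∈ c.support, v ∈ s)

lemma acycOn_mono {H : SimpleGraph V} {s s' : Set V} (hss : s' ⊆ s) (h : acycOn H s) :
    acycOn H s' := fun u c hc hsup => h u c hc (fun v hv => hss (hsup v hv))

lemma eq_getVert_one_of_mem_edges {H : SimpleGraph V} {u w x : V} (p : H.Walk u w)
    (hp : p.IsPath) (hx : s(u, x) ∈ p.edges) : x = p.getVert 1 := by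
  cases p with
  | nil => simp at hx
  | cons h₃ q₃ =>
    rw [SimpleGraph.Walk.edges_cons, List.mem_cons] at hx
    rcases hx with hx | hx
    · have := Sym2.congr_right.mp hx
      simp [this]
    · exact absurd (SimpleGraph.Walk.fst_mem_support_of_mem_edges q₃ hx)
        ((SimpleGraph.Walk.cons_isPath_iff _ _).mp hp).2

lemma exists_leaf [Finite V] {H : SimpleGraph V} {s : Set V} (hne : s.Nonempty)
    (hacyc : acycOn H s) :
    ∃ v ∈ s, ∀ a, a ∈ s → H.Adj v a → ∀ b, b ∈ s → H.Adj v b → a = b := by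
  classical
  have : Fintype V := Fintype.ofFinite V
  obtain ⟨v₀, hv₀⟩ := hne
  set L : Set ℕ := {n | ∃ (u w : V) (p : H.Walk u w), p.IsPath ∧ (∀ v ∈ p.support, v ∈ s) ∧
    p.length = n} with hL
  have hLne : L.Nonempty := ⟨0, v₀, v₀, SimpleGraph.Walk.nil, by simp, by simpa using hv₀, rfl⟩
  have hLbdd : BddAbove L := by
    refine ⟨Fintype.card V, ?_⟩
    rintro n ⟨u, w, p, hp, _, rfl⟩
    exact le_of_lt hp.length_lt
  obtain ⟨u, w, p, hp, hps, hplen⟩ := Nat.sSup_mem hLne hLbdd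
  refine ⟨u, hps u (SimpleGraph.Walk.start_mem_support p), ?_⟩
  -- every s-neighbor of u is in p.support
  have hmem : ∀ a, a ∈ s → H.Adj u a → a ∈ p.support := by
    intro a ha hadj
    by_contra hns
    have hpath : (SimpleGraph.Walk.cons hadj.symm p).IsPath :=
      (SimpleGraph.Walk.cons_isPath_iff _ _).mpr ⟨hp, hns⟩
    have : (SimpleGraph.Walk.cons hadj.symm p).length ∈ L := by
      refine ⟨a, w, _, hpath, ?_, rfl⟩
      intro v hv
      rcases (by simpa using hv : v = a ∨ v ∈ p.support) with rfl | hv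
      · exact ha
      · exact hps v hv
    have := le_csSup hLbdd this
    simp only [SimpleGraph.Walk.length_cons, hplen] at this
    omega
  -- every s-neighbor of u gives edge s(u,a) ∈ p.edges
  have hedge : ∀ a, a ∈ s → H.Adj u a → s(u, a) ∈ p.edges := by
    intro a ha hadj
    have hasup := hmem a ha hadj
    set q := p.takeUntil a hasup with hq
    by_contra hne'
    have hqe : s(a, u) ∉ q.edges := by
      rw [Sym2.eq_swap]
      intro hmem'
      exact hne' (SimpleGraph.Walk.edges_takeUntil_subset p hasup hmem')
    have hcyc : (SimpleGraph.Walk.cons hadj.symm q).IsCycle :=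
      (SimpleGraph.Walk.cons_isCycle_iff _ _).mpr ⟨hp.takeUntil hasup, hqe⟩
    refine hacyc a _ hcyc ?_
    intro v hv
    rcases (by simpa using hv : v = a ∨ v ∈ q.support) with rfl | hv
    · exact ha
    · exact hps v (SimpleGraph.Walk.support_takeUntil_subset p hasup hv)
  intro a ha hadja b hb hadjb
  have h1 := eq_getVert_one_of_mem_edges p hp (hedge a ha hadja)
  have h2 := eq_getVert_one_of_mem_edges p hp (hedge b hb hadjb)
  rw [h1, h2]

end Forest

section ForestKE
variable {V : Type*}

lemma einside_anti {H : SimpleGraph V} {s s' : Set V} (hss : s' ⊆ s) :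
    einside H s' ⊆ einside H s := by
  rintro e ⟨he1, he2⟩
  exact ⟨he1, fun u hu => hss (he2 u hu)⟩

lemma forestKE [Finite V] {H : SimpleGraph V} :
    ∀ (n : ℕ) (s : Set V), s.ncard = n → acycOn H s →
    ∃ S E, S ⊆ s ∧ H.IsIndepSet' S ∧ E ⊆ einside H s ∧
      (E.Pairwise fun e e' => ∀ v, v ∈ e → v ∉ e') ∧ s.ncard ≤ S.ncard + E.ncard := by
  intro n
  induction n using Nat.strong_induction_on with
  | _ n ih =>
  intro s hn hacyc
  rcases Set.eq_empty_or_nonempty s with rfl | hne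
  · exact ⟨∅, ∅, by simp, by simp [SimpleGraph.IsIndepSet'], by simp, by simp, by simp⟩
  have hpos : 0 < s.ncard := (Set.ncard_pos (Set.toFinite _)).mpr hne
  obtain ⟨v, hv, hleaf⟩ := exists_leaf hne hacyc
  by_cases hnb : ∃ a ∈ s, H.Adj v a
  · obtain ⟨a, ha, hadj⟩ := hnb
    have hva : v ≠ a := hadj.ne
    set s' := s \ {v, a} with hs'
    have hsub : s' ⊆ s := Set.diff_subset
    have hva' : a ∈ s \ {v} := ⟨ha, by simp [Ne.symm hva]⟩
    have hstep : s' = (s \ {v}) \ {a} := by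
      rw [hs', Set.diff_diff]
      simp [Set.pair_comm]
    have hc1 : (s \ {v}).ncard = s.ncard - 1 := Set.ncard_diff_singleton_of_mem hv
    have hc2 : s'.ncard = s.ncard - 2 := by
      rw [hstep, Set.ncard_diff_singleton_of_mem hva', hc1]
      omega
    have hpos2 : 2 ≤ s.ncard := by
      have : ({v, a} : Set V).ncard = 2 := Set.ncard_pair hva
      have hp : ({v, a} : Set V) ⊆ s := by
        intro u hu
        rcases hu with rfl | rfl
        exacts [hv, ha]
      calc 2 = ({v, a} : Set V).ncard := this.symm
        _ ≤ s.ncard := Set.ncard_le_ncard hp (Set.toFinite _)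
    have hlt : s.ncard - 2 < n := by omega
    obtain ⟨S', E', hS's, hS'i, hE's, hE'd, hcnt⟩ := ih _ hlt s' hc2
      (acycOn_mono hsub hacyc)
    have hvS' : v ∉ S' := fun h => (hS's h).2 (by simp)
    have hedge : s(v, a) ∈ einside H s := by
      refine ⟨hadj, ?_⟩
      intro u hu
      rcases Sym2.mem_iff.mp hu with rfl | rfl
      exacts [hv, ha]
    have hEvert : ∀ e ∈ E', ∀ u, u ∈ e → u ∈ s' := fun e he => (hE's he).2
    have hnewE : s(v, a) ∉ E' := by
      intro h
      exact (hEvert _ h v (by simp)).2 (by simp)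
    refine ⟨insert v S', insert (s(v, a)) E', ?_, ?_, ?_, ?_, ?_⟩
    · exact Set.insert_subset hv (hS's.trans hsub)
    · refine Set.Pairwise.insert hS'i ?_
      intro b hb hvb
      have hbs : b ∈ s := hsub (hS's hb)
      have hbna : b ≠ a := fun h => ((hS's hb).2 (by simp [h]))
      constructor
      · intro hadjb; exact hbna (hleaf b hbs hadjb a ha hadj)
      · intro hadjb; exact hbna (hleaf b hbs hadjb.symm a ha hadj)
    · refine Set.insert_subset hedge (hE's.trans (einside_anti hsub))
    · refine Set.Pairwise.insert hE'd ?_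
      intro e he hevva
      have hds : ∀ u, u ∈ s(v, a) → u ∉ e := by
        intro u hu hue
        have := hEvert e he u hue
        rcases Sym2.mem_iff.mp hu with rfl | rfl
        · exact this.2 (by simp)
        · exact this.2 (by simp)
      constructor
      · exact hds
      · intro u hue hu2
        exact hds u hu2 hue
    · rw [Set.ncard_insert_of_notMem hvS' (Set.toFinite _),
        Set.ncard_insert_of_notMem hnewE (Set.toFinite _)]
      omega
  · push_neg at hnb
    set s' := s \ {v} with hs'
    have hcard' : s'.ncard = n - 1 := by
      rw [hs', Set.ncard_diff_singleton_of_mem hv, hn]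
    have hlt : n - 1 < n := by omega
    obtain ⟨S', E', hS's, hS'i, hE's, hE'd, hcnt⟩ := ih _ hlt s' hcard'
      (acycOn_mono Set.diff_subset hacyc)
    have hvnotS' : v ∉ S' := fun h => (hS's h).2 rfl
    refine ⟨insert v S', E', ?_, ?_, hE's.trans (einside_anti Set.diff_subset), hE'd, ?_⟩
    · exact Set.insert_subset hv (hS's.trans Set.diff_subset)
    · refine Set.Pairwise.insert hS'i ?_
      intro b hb hvb
      constructor
      · intro hadj; exact hnb b (Set.diff_subset (hS's hb)) hadj
      · intro hadj; exact hnb b (Set.diff_subset (hS's hb)) hadj.symm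
    · rw [Set.ncard_insert_of_notMem hvnotS' (Set.toFinite _)]
      omega

end ForestKE

section Structure
variable {V : Type*}

lemma reach_classify {G : SimpleGraph V} (x y : V) :
    ∀ {u w : V}, G.Walk u w →
      ((G.deleteEdges {s(x, y)}).Reachable u w ∨
       ((G.deleteEdges {s(x, y)}).Reachable u x ∧ (G.deleteEdges {s(x, y)}).Reachable y w) ∨
       ((G.deleteEdges {s(x, y)}).Reachable u y ∧ (G.deleteEdges {s(x, y)}).Reachable x w)) := by
  intro u w p
  set D := G.deleteEdges {s(x, y)} with hD
  induction p with
  | nil => exact Or.inl (SimpleGraph.Reachable.refl _)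
  | @cons u₁ b w₁ h p ih =>
    by_cases he : s(u₁, b) = s(x, y)
    · rw [Sym2.eq_iff] at he
      rcases he with ⟨rfl, rfl⟩ | ⟨rfl, rfl⟩
      · -- u₁ = x, b = y
        rcases ih with h1 | ⟨h1, h2⟩ | ⟨h1, h2⟩
        · exact Or.inr (Or.inl ⟨SimpleGraph.Reachable.refl _, h1⟩)
        · exact Or.inl (h1.symm.trans h2)
        · exact Or.inl h2
      · -- u₁ = y, b = x
        rcases ih with h1 | ⟨h1, h2⟩ | ⟨h1, h2⟩
        · exact Or.inr (Or.inr ⟨SimpleGraph.Reachable.refl _, h1⟩)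
        · exact Or.inl h2
        · exact Or.inr (Or.inr ⟨SimpleGraph.Reachable.refl _, h2⟩)
    · have hDadj : D.Adj u₁ b := by
        rw [hD, SimpleGraph.deleteEdges_adj]
        exact ⟨h, by simpa using he⟩
      rcases ih with h1 | ⟨h1, h2⟩ | ⟨h1, h2⟩
      · exact Or.inl (hDadj.reachable.trans h1)
      · exact Or.inr (Or.inl ⟨hDadj.reachable.trans h1, h2⟩)
      · exact Or.inr (Or.inr ⟨hDadj.reachable.trans h1, h2⟩)

lemma reach_of_mem_support {H : SimpleGraph V} {a b u w : V} (p : H.Walk a b)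
    (hu : u ∈ p.support) (hw : w ∈ p.support) : H.Reachable u w := by
  classical
  exact ((p.takeUntil u hu).reachable.symm).trans (p.takeUntil w hw).reachable

end Structure

theorem stmt15 {V : Type*} [Fintype V] (G : SimpleGraph V)
    (hconn : G.Connected) (huni : G.edgeSet.ncard = Fintype.card V)
    {v : V} (c : G.Walk v v) (hc : c.IsCycle)
    (x y : V) (hx : x ∉ c.support) (hy : y ∈ c.support) (hadj : G.Adj x y)
    (hcore : (⟨x, rfl⟩ : ((G.deleteEdges {s(x,y)}).connectedComponentMk x).supp) ∈
      core (treeComp G x y)) :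
    indepNum G + matchNum G = Fintype.card V := by 
  classical
  set D := G.deleteEdges {s(x, y)} with hD
  set A : Set V := ((G.deleteEdges {s(x,y)}).connectedComponentMk x).supp with hA
  have hmemA : ∀ u : V, u ∈ A ↔ D.Reachable u x := by
    intro u
    rw [hA, SimpleGraph.ConnectedComponent.mem_supp_iff, SimpleGraph.ConnectedComponent.eq]
  have hxA : x ∈ A := (hmemA x).mpr (SimpleGraph.Reachable.refl x)
  have hxny : x ≠ y := hadj.ne
  have hedgexy : s(x, y) ∈ G.edgeSet := hadj
  have hNpos : 0 < Fintype.card V := Fintype.card_pos_iff.mpr ⟨x⟩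
  have hDedges : D.edgeSet.ncard = Fintype.card V - 1 := by
    rw [hD, SimpleGraph.edgeSet_deleteEdges, Set.ncard_diff_singleton_of_mem hedgexy, huni]
  have hDle : ∀ {a b : V}, D.Adj a b → G.Adj a b := by
    intro a b hab
    rw [hD, SimpleGraph.deleteEdges_adj] at hab
    exact hab.1
  have hDwalkEdges : ∀ {a b : V} (p : D.Walk a b) (e : Sym2 V), e ∈ p.edges → e ∈ G.edgeSet := by
    intro a b p e he
    have := p.edges_subset_edgeSet he
    rw [hD, SimpleGraph.edgeSet_deleteEdges] at this
    exact this.1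
  -- the cycle lives in D
  have hcEdges : ∀ e ∈ c.edges, e ∈ D.edgeSet := by
    intro e he
    rw [hD, SimpleGraph.edgeSet_deleteEdges]
    refine ⟨c.edges_subset_edgeSet he, ?_⟩
    simp only [Set.mem_singleton_iff]
    rintro rfl
    exact hx (SimpleGraph.Walk.fst_mem_support_of_mem_edges c he)
  have hcDcyc : (c.transfer D hcEdges).IsCycle := hc.transfer _
  have hcDsupp : (c.transfer D hcEdges).support = c.support :=
    SimpleGraph.Walk.support_transfer _ _
  -- y is not in the component of x
  have hyA : y ∉ A := by
    intro hyA
    have hxyreach : D.Reachable y x := (hmemA y).mp hyA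
    have hconnD : connOn D Set.univ := by
      intro u _ w _
      obtain ⟨p⟩ := hconn.preconnected u w
      have hr : D.Reachable u w := by
        rcases reach_classify x y p with h1 | ⟨h1, h2⟩ | ⟨h1, h2⟩
        · exact h1
        · exact (h1.trans hxyreach.symm).trans h2
        · exact (h1.trans hxyreach).trans h2
      obtain ⟨q⟩ := hr
      exact ⟨q, fun _ _ => Set.mem_univ _⟩
    have hle := connOn_cycle_card_le hconnD (c.transfer D hcEdges) hcDcyc
      (fun _ _ => Set.mem_univ _)
    have heq : einside D Set.univ = D.edgeSet := by
      ext e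
      simp [einside]
    rw [heq, hDedges, Set.ncard_univ, Nat.card_eq_fintype_card] at hle
    omega
  set B : Set V := Aᶜ with hB
  have hyB : y ∈ B := hyA
  have hmemB : ∀ u : V, u ∈ B ↔ ¬ D.Reachable u x := by
    intro u
    rw [hB, Set.mem_compl_iff, hmemA]
  have hBreach : ∀ u ∈ B, D.Reachable u y := by
    intro u hu
    obtain ⟨p⟩ := hconn.preconnected u y
    rcases reach_classify x y p with h1 | ⟨h1, h2⟩ | ⟨h1, h2⟩
    · exact h1
    · exact absurd h1 ((hmemB u).mp hu)
    · exact h1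
  -- support of the cycle is in B
  have hsuppB : ∀ u ∈ c.support, u ∈ B := by
    intro u hu
    rw [← hcDsupp] at hu hy
    have hr : D.Reachable u y := reach_of_mem_support _ hu hy
    rw [hmemB]
    intro hux
    exact hyA ((hmemA y).mpr (hr.symm.trans hux))
  -- connectivity of A and B within G
  have hconnGA : connOn G A := by
    intro u hu w hw
    obtain ⟨p⟩ := ((hmemA u).mp hu).trans ((hmemA w).mp hw).symm
    refine ⟨p.transfer G (fun e he => hDwalkEdges p e he), ?_⟩
    rw [SimpleGraph.Walk.support_transfer]
    intro z hz
    exact (hmemA z).mpr ((reach_of_mem_support p hz p.start_mem_support).trans ((hmemA u).mp hu))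
  have hconnGB : connOn G B := by
    intro u hu w hw
    obtain ⟨p⟩ := (hBreach u hu).trans (hBreach w hw).symm
    refine ⟨p.transfer G (fun e he => hDwalkEdges p e he), ?_⟩
    rw [SimpleGraph.Walk.support_transfer]
    intro z hz
    rw [hmemB]
    intro hzx
    exact ((hmemB u).mp hu) ((reach_of_mem_support p p.start_mem_support hz).trans hzx)
  -- edge partition
  have hcompclosed : ∀ {a b : V}, D.Adj a b → a ∈ A → b ∈ A := by
    intro a b hab ha
    exact (hmemA b).mpr (hab.symm.reachable.trans ((hmemA a).mp ha))
  have hpart : G.edgeSet = insert (s(x, y)) (einside G A ∪ einside G B) := by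
    ext e
    induction e with | h a b =>
    constructor
    · intro he
      by_cases hexy : s(a, b) = s(x, y)
      · rw [hexy]; exact Set.mem_insert _ _
      · have hDab : D.Adj a b := by
          rw [hD, SimpleGraph.deleteEdges_adj]
          exact ⟨he, by simpa using hexy⟩
        refine Set.mem_insert_of_mem _ ?_
        by_cases ha : a ∈ A
        · refine Or.inl ⟨he, ?_⟩
          intro z hz
          rcases Sym2.mem_iff.mp hz with rfl | rfl
          · exact ha
          · exact hcompclosed hDab ha
        · refine Or.inr ⟨he, ?_⟩
          intro z hz
          rcases Sym2.mem_iff.mp hz with rfl | rfl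
          · exact ha
          · intro hbA
            exact ha (hcompclosed hDab.symm hbA)
    · intro he
      rcases he with he | he | he
      · rw [he]; exact hedgexy
      · exact he.1
      · exact he.1
  have hdisj1 : s(x, y) ∉ einside G A ∪ einside G B := by
    rintro (⟨_, h2⟩ | ⟨_, h2⟩)
    · exact hyA (h2 y (by simp))
    · exact (h2 x (by simp)) hxA
  have hdisj2 : Disjoint (einside G A) (einside G B) := by
    rw [Set.disjoint_left]
    rintro e ⟨he1, he2⟩ ⟨_, he4⟩
    induction e with | h a b =>
    exact (he4 a (by simp)) (he2 a (by simp))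
  have hcount : (einside G A).ncard + (einside G B).ncard + 1 = Fintype.card V := by
    have h1 : G.edgeSet.ncard = (einside G A ∪ einside G B).ncard + 1 := by
      rw [hpart, Set.ncard_insert_of_notMem hdisj1 (Set.toFinite _)]
    rw [Set.ncard_union_eq hdisj2 (Set.toFinite _) (Set.toFinite _)] at h1
    omega
  have hnAB : A.ncard + B.ncard = Fintype.card V := by
    rw [hB]
    rw [Set.ncard_add_ncard_compl A]
    exact Nat.card_eq_fintype_card
  have hAcard : A.ncard ≤ (einside G A).ncard + 1 := connOn_card_le hconnGA ⟨x, hxA⟩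
  have hBcard : B.ncard ≤ (einside G B).ncard := by
    refine connOn_cycle_card_le hconnGB c hc hsuppB
  have hApos : 0 < A.ncard := (Set.ncard_pos (Set.toFinite _)).mpr ⟨x, hxA⟩
  have hBpos : 0 < B.ncard := (Set.ncard_pos (Set.toFinite _)).mpr ⟨y, hyB⟩
  have heA : (einside G A).ncard = A.ncard - 1 := by omega
  have heB : (einside G B).ncard = B.ncard := by omega
  -- acyclicity
  have hacycA : acycOn G A := by
    intro u c' hc' hsup
    have := connOn_cycle_card_le hconnGA c' hc' hsup
    omega
  have hacycA' : acycOn G (A \ {x}) := acycOn_mono Set.diff_subset hacycA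
  have hacycB' : acycOn G (B \ {y}) := by
    intro u' c' hcyc' hsupp'
    -- rotate c to be based at y
    have hrot := hc.rotate hy
    have hrotsupp : ∀ z ∈ (c.rotate y hy).support, z ∈ B := by
      intro z hz
      refine hsuppB z ?_
      unfold SimpleGraph.Walk.rotate at hz
      rcases (SimpleGraph.Walk.mem_support_append_iff _ _).mp hz with hz | hz
      · exact SimpleGraph.Walk.support_dropUntil_subset _ _ hz
      · exact SimpleGraph.Walk.support_takeUntil_subset _ _ hz
    obtain ⟨z, hadj₂, q₂, hcg⟩ : ∃ z, ∃ h : G.Adj y z, ∃ q : G.Walk z y,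
        c.rotate y hy = SimpleGraph.Walk.cons h q := by
      cases hcg : c.rotate y hy with
      | nil =>
        rw [hcg] at hrot
        exact absurd SimpleGraph.Walk.Nil.nil hrot.not_nil
      | cons h q => exact ⟨_, h, q, rfl⟩
    rw [hcg] at hrot hrotsupp
    obtain ⟨hq₂path, hq₂e⟩ := (SimpleGraph.Walk.cons_isCycle_iff q₂ hadj₂).mp hrot
    have hzB : z ∈ B := hrotsupp z (by simp)
    have he₁ : s(y, z) ∈ einside G B := by
      refine ⟨hadj₂, ?_⟩
      intro w hw
      rcases Sym2.mem_iff.mp hw with rfl | rfl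
      exacts [hyB, hzB]
    have hq₂supp : ∀ w ∈ q₂.support, w ∈ B := fun w hw => hrotsupp w (by simp [hw])
    have hconnB' : connOn (G.deleteEdges {s(y, z)}) B := by
      intro u₁ hu₁ w₁ hw₁
      obtain ⟨p, hp⟩ := hconnGB u₁ hu₁ w₁ hw₁
      exact walk_avoid_edge hq₂e hq₂supp p hp
    have hc'edges : ∀ e ∈ c'.edges, e ∈ (G.deleteEdges {s(y, z)}).edgeSet := by
      intro e he
      rw [SimpleGraph.edgeSet_deleteEdges]
      refine ⟨c'.edges_subset_edgeSet he, ?_⟩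
      simp only [Set.mem_singleton_iff]
      rintro rfl
      exact (hsupp' y (SimpleGraph.Walk.fst_mem_support_of_mem_edges c' he)).2 rfl
    have hcyc'' := hcyc'.transfer hc'edges
    have hle := connOn_cycle_card_le hconnB' (c'.transfer _ hc'edges) hcyc''
      (by
        rw [SimpleGraph.Walk.support_transfer]
        exact fun w hw => (hsupp' w hw).1)
    have hsub : einside (G.deleteEdges {s(y, z)}) B ⊆ einside G B \ {s(y, z)} := by
      rintro e ⟨he, hv⟩
      rw [SimpleGraph.edgeSet_deleteEdges] at he
      exact ⟨⟨he.1, hv⟩, by simpa using he.2⟩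
    have h3 : (einside (G.deleteEdges {s(y, z)}) B).ncard ≤ (einside G B \ {s(y, z)}).ncard :=
      Set.ncard_le_ncard hsub (Set.toFinite _)
    have h4 : (einside G B \ {s(y, z)}).ncard = (einside G B).ncard - 1 :=
      Set.ncard_diff_singleton_of_mem he₁
    have h5 : 0 < (einside G B).ncard := (Set.ncard_pos (Set.toFinite _)).mpr ⟨_, he₁⟩
    omega
  -- forest KE on the two pieces
  obtain ⟨S₁, E₁, hS₁s, hS₁i, hE₁s, hE₁d, hcnt₁⟩ :=
    forestKE (A \ {x}).ncard (A \ {x}) rfl hacycA'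
  obtain ⟨S₂, E₂, hS₂s, hS₂i, hE₂s, hE₂d, hcnt₂⟩ :=
    forestKE (B \ {y}).ncard (B \ {y}) rfl hacycB'
  have hA'card : (A \ {x}).ncard = A.ncard - 1 := Set.ncard_diff_singleton_of_mem hxA
  have hB'card : (B \ {y}).ncard = B.ncard - 1 := Set.ncard_diff_singleton_of_mem hyB
  set αT := indepNum (treeComp G x y) with hαT
  -- the core bound for S₁
  have hS₁bound : S₁.ncard + 1 ≤ αT := by
    set sS : Set ((G.deleteEdges {s(x,y)}).connectedComponentMk x).supp :=
      Subtype.val ⁻¹' S₁ with hsS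
    have himg : Subtype.val '' sS = S₁ := by
      rw [hsS, Set.image_preimage_eq_inter_range, Subtype.range_coe]
      exact Set.inter_eq_self_of_subset_left (hS₁s.trans Set.diff_subset)
    have hcard : sS.ncard = S₁.ncard := by
      rw [← himg, Set.ncard_image_of_injective _ Subtype.val_injective]
    have hindep : (treeComp G x y).IsIndepSet' sS := by
      intro a ha b hb hab hadj'
      have hGab : G.Adj ↑a ↑b := hDle hadj'
      exact hS₁i ha hb (fun h => hab (Subtype.val_injective h)) hGab
    have hle' : sS.ncard ≤ αT := indep_ncard_le_indepNum _ hindep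
    rcases eq_or_lt_of_le hle' with heq | hlt
    · exfalso
      have hmax : IsMaxIndepSet (treeComp G x y) sS := ⟨hindep, heq⟩
      have hxin : (⟨x, rfl⟩ : ((G.deleteEdges {s(x,y)}).connectedComponentMk x).supp) ∈ sS :=
        hcore sS hmax
      exact (hS₁s hxin).2 rfl
    · omega
  -- a maximum independent set of the tree component, pushed into V
  obtain ⟨sT, hsTi, hsTcard⟩ := exists_maxIndepSet (treeComp G x y)
  have hxT : (⟨x, rfl⟩ : ((G.deleteEdges {s(x,y)}).connectedComponentMk x).supp) ∈ sT :=
    hcore sT ⟨hsTi, hsTcard⟩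
  set SA : Set V := Subtype.val '' sT with hSA
  have hSAcard : SA.ncard = αT := by
    rw [hSA, Set.ncard_image_of_injective _ Subtype.val_injective, hsTcard]
  have hSAsub : SA ⊆ A := by
    rintro _ ⟨a, _, rfl⟩
    exact a.2
  have hSAi : G.IsIndepSet' SA := by
    rintro _ ⟨a, ha, rfl⟩ _ ⟨b, hb, rfl⟩ hab hadj'
    have hne : s(↑a, ↑b) ≠ s(x, y) := by
      intro h
      rcases Sym2.eq_iff.mp h with ⟨h1, h2⟩ | ⟨h1, h2⟩
      · exact hyA (h2 ▸ b.2)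
      · exact hyA (h1 ▸ a.2)
    have hDab : D.Adj ↑a ↑b := by
      rw [hD, SimpleGraph.deleteEdges_adj]
      exact ⟨hadj', by simpa using hne⟩
    have hab' : a ≠ b := fun h => hab (congrArg _ h)
    exact hsTi ha hb hab' hDab
  -- assemble the independent set
  have hdisjS : Disjoint SA S₂ :=
    Set.disjoint_of_subset hSAsub (hS₂s.trans Set.diff_subset) disjoint_compl_right
  have hScard : (SA ∪ S₂).ncard = αT + S₂.ncard := by
    rw [Set.ncard_union_eq hdisjS (Set.toFinite _) (Set.toFinite _), hSAcard]
  have hcross : ∀ a ∈ SA, ∀ b ∈ S₂, ¬ G.Adj a b := by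
    intro a ha b hb hadj'
    have haA : a ∈ A := hSAsub ha
    have hbB' : b ∈ B \ {y} := hS₂s hb
    have hne : s(a, b) ≠ s(x, y) := by
      intro h
      rcases Sym2.eq_iff.mp h with ⟨h1, h2⟩ | ⟨h1, h2⟩
      · exact hbB'.2 (by simp [h2])
      · exact hbB'.1 (h2 ▸ hxA)
    have hDab : D.Adj a b := by
      rw [hD, SimpleGraph.deleteEdges_adj]
      exact ⟨hadj', by simpa using hne⟩
    exact hbB'.1 (hcompclosed hDab haA)
  have hSi : G.IsIndepSet' (SA ∪ S₂) := by
    intro a ha b hb hab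
    rcases ha with ha | ha <;> rcases hb with hb | hb
    · exact hSAi ha hb hab
    · exact hcross a ha b hb
    · exact fun h => hcross b hb a ha h.symm
    · exact hS₂i ha hb hab
  -- assemble the matching
  have hE₁v : ∀ e ∈ E₁, ∀ u ∈ e, u ∈ A \ {x} := fun e he => (hE₁s he).2
  have hE₂v : ∀ e ∈ E₂, ∀ u ∈ e, u ∈ B \ {y} := fun e he => (hE₂s he).2
  have hxyE : s(x, y) ∉ E₁ ∪ E₂ := by
    rintro (h | h)
    · exact (hE₁v _ h x (by simp)).2 rfl
    · exact (hE₂v _ h x (by simp)).1 hxA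
  have hdisjE : Disjoint E₁ E₂ := by
    rw [Set.disjoint_left]
    intro e he₁ he₂
    induction e with | h a b =>
    exact (hE₂v _ he₂ a (by simp)).1 ((hE₁v _ he₁ a (by simp)).1)
  have hEcard : (insert (s(x, y)) (E₁ ∪ E₂)).ncard = E₁.ncard + E₂.ncard + 1 := by
    rw [Set.ncard_insert_of_notMem hxyE (Set.toFinite _),
      Set.ncard_union_eq hdisjE (Set.toFinite _) (Set.toFinite _)]
  have hEsub : insert (s(x, y)) (E₁ ∪ E₂) ⊆ G.edgeSet := by
    rintro e (rfl | he | he)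
    · exact hedgexy
    · exact (hE₁s he).1
    · exact (hE₂s he).1
  have hEd : (insert (s(x, y)) (E₁ ∪ E₂)).Pairwise fun e e' => ∀ v, v ∈ e → v ∉ e' := by
    have hU : (E₁ ∪ E₂).Pairwise fun e e' => ∀ v, v ∈ e → v ∉ e' := by
      intro e he e' he' hne
      rcases he with he | he <;> rcases he' with he' | he'
      · exact hE₁d he he' hne
      · intro u hu hu'
        exact (hE₂v _ he' u hu').1 ((hE₁v _ he u hu).1)
      · intro u hu hu'
        exact (hE₂v _ he u hu).1 ((hE₁v _ he' u hu').1)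
      · exact hE₂d he he' hne
    refine Set.Pairwise.insert hU ?_
    intro e he hne
    have hxyv : ∀ u, u ∈ s(x, y) → u ∉ e := by
      intro u hu hue
      rcases Sym2.mem_iff.mp hu with rfl | rfl
      · rcases he with he | he
        · exact (hE₁v _ he u hue).2 rfl
        · exact (hE₂v _ he u hue).1 hxA
      · rcases he with he | he
        · exact hyA (hE₁v _ he u hue).1
        · exact (hE₂v _ he u hue).2 rfl
    constructor
    · exact hxyv
    · intro u hue hu2
      exact hxyv u hu2 hue
  -- final accounting
  have h1 : (SA ∪ S₂).ncard ≤ indepNum G := indep_ncard_le_indepNum G hSi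
  have h2 : (insert (s(x, y)) (E₁ ∪ E₂)).ncard ≤ matchNum G :=
    edgeMatching_le_matchNum hEsub hEd
  have h3 : indepNum G + matchNum G ≤ Nat.card V := indepNum_add_matchNum_le G
  rw [Nat.card_eq_fintype_card] at h3
  omega
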